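/- The integral from 0 to π/2 of ln(1 + tan x) dx equals (π/4)·ln 2 + G, where G = ∑_{k=0}^{∞} (-1)^k/(2k+1)^2 is Catalan's constant; moreover the integral from 0 to 1 of ln(1+x^2)/(1+x^2) dx equals (π/2)·ln 2 - G and the integral from 1 to ∞ of ln(1+t^2)/(1+t^2) dt equals (π/2)·ln 2 + G. -/

import Mathlib

open Real

open MeasureTheory Set intervalIntegral

lemma abs_log_le (x : ℝ) (hx : 0 < x) : |Real.log x| ≤ 2 * x ^ (-(1/2) : ℝ) + 2 * x := by
  rcases le_or_gt 1 x with h | h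
  · have h0 : Real.log x ≤ x := (Real.log_le_sub_one_of_pos hx).trans (by linarith)
    have h1 : 0 ≤ Real.log x := Real.log_nonneg h
    have h2 : (0:ℝ) ≤ 2 * x ^ (-(1/2) : ℝ) := by positivity
    rw [abs_of_nonneg h1]; linarith
  · have h1 : Real.log x ≤ 0 := Real.log_nonpos hx.le h.le
    rw [abs_of_nonpos h1]
    have h2 : -Real.log x = 2 * Real.log (x ^ (-(1/2):ℝ)) := by
      rw [Real.log_rpow hx]; ring
    have h3 : Real.log (x ^ (-(1/2):ℝ)) ≤ x ^ (-(1/2):ℝ) :=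
      (Real.log_le_sub_one_of_pos (by positivity)).trans (by linarith)
    nlinarith [hx.le]

lemma intervalIntegrable_log01 {c : ℝ} (hc : 0 ≤ c) :
    IntervalIntegrable Real.log volume 0 c := by
  have hg : IntervalIntegrable (fun x : ℝ => 2 * x ^ (-(1/2) : ℝ) + 2 * x) volume 0 c :=
    ((intervalIntegrable_rpow' (by norm_num)).const_mul 2).add
      ((continuous_const.mul continuous_id).intervalIntegrable 0 c)
  refine hg.mono_fun Real.measurable_log.aestronglyMeasurable ?_
  have h : Set.uIoc (0:ℝ) c = Ioc 0 c := by rw [uIoc_of_le hc]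
  apply (MeasureTheory.ae_restrict_iff' measurableSet_uIoc).mpr
  
  filter_upwards with x hx
  rw [h] at hx
  have h1 := abs_log_le x hx.1
  have h2 : (0:ℝ) ≤ 2 * x ^ (-(1/2) : ℝ) + 2 * x := by
    have := Real.rpow_nonneg hx.1.le (-(1/2):ℝ); linarith [hx.1.le]
  calc ‖Real.log x‖ = |Real.log x| := rfl
    _ ≤ 2 * x ^ (-(1/2) : ℝ) + 2 * x := h1
    _ ≤ ‖2 * x ^ (-(1/2) : ℝ) + 2 * x‖ := le_abs_self _

lemma sin_lb {x : ℝ} (h0 : 0 ≤ x) (h1 : x ≤ π) : 2/π^2 * (x*(π-x)) ≤ Real.sin x := by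
  have hπ := Real.pi_pos
  rcases le_or_gt x (π/2) with h | h
  · have j := Real.mul_le_sin h0 h
    have : 2/π^2 * (x*(π-x)) ≤ 2/π * x := by
      rw [div_mul_eq_mul_div, div_mul_eq_mul_div, div_le_div_iff₀ (by positivity) hπ]
      nlinarith [mul_nonneg hπ.le (sq_nonneg x)]
    linarith
  · have j := Real.mul_le_sin (x := π - x) (by linarith) (by linarith)
    rw [Real.sin_pi_sub] at j
    have : 2/π^2 * (x*(π-x)) ≤ 2/π * (π-x) := by
      rw [div_mul_eq_mul_div, div_mul_eq_mul_div, div_le_div_iff₀ (by positivity) hπ]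
      nlinarith [mul_nonneg hπ.le (sq_nonneg (π - x))]
    linarith

lemma ils_pi : IntervalIntegrable (fun x => Real.log (Real.sin x)) volume 0 π := by
  have hπ := Real.pi_pos
  have habs : IntervalIntegrable (fun x => |Real.log x|) volume 0 π :=
    (intervalIntegrable_log01 hπ.le).abs
  have h2 : IntervalIntegrable (fun x => |Real.log (π - x)|) volume 0 π := by
    have := habs.comp_sub_left π
    simpa using this.symm
  have hg : IntervalIntegrable
      (fun x => |Real.log (2/π^2)| + (|Real.log x| + |Real.log (π - x)|)) volume 0 π :=
    intervalIntegrable_const.add (habs.add h2)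
  refine hg.mono_fun ((Real.measurable_log.comp Real.measurable_sin).aestronglyMeasurable) ?_
  apply (MeasureTheory.ae_restrict_iff' measurableSet_uIoc).mpr
  filter_upwards with x hx
  rw [uIoc_of_le hπ.le] at hx
  have hb : (0:ℝ) ≤ |Real.log (2/π^2)| + (|Real.log x| + |Real.log (π - x)|) := by positivity
  rcases eq_or_lt_of_le hx.2 with heq | hlt
  · have hsx : Real.sin x = 0 := by rw [heq]; exact Real.sin_pi
    rw [hsx, Real.log_zero, norm_zero]
    exact hb.trans (le_abs_self _)
  · have hs : 0 < Real.sin x := Real.sin_pos_of_pos_of_lt_pi hx.1 hlt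
    have hub : Real.log (Real.sin x) ≤ 0 := Real.log_nonpos hs.le (Real.sin_le_one x)
    have hlb0 : 0 < 2/π^2 * (x*(π-x)) :=
      mul_pos (by positivity) (mul_pos hx.1 (by linarith))
    have hlb : Real.log (2/π^2 * (x*(π-x))) ≤ Real.log (Real.sin x) :=
      Real.log_le_log hlb0 (sin_lb hx.1.le hlt.le)
    have hexp : Real.log (2/π^2 * (x*(π-x))) =
        Real.log (2/π^2) + (Real.log x + Real.log (π - x)) := by
      rw [Real.log_mul (by positivity) (ne_of_gt (mul_pos hx.1 (by linarith : (0:ℝ) < π - x))), Real.log_mul (ne_of_gt hx.1) (by linarith)]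
    calc ‖Real.log (Real.sin x)‖ = -Real.log (Real.sin x) := by
          rw [Real.norm_eq_abs, abs_of_nonpos hub]
      _ ≤ -(Real.log (2/π^2) + (Real.log x + Real.log (π - x))) := by rw [← hexp]; linarith
      _ ≤ |Real.log (2/π^2)| + (|Real.log x| + |Real.log (π - x)|) := by
          have := abs_nonneg (Real.log (2/π^2))
          have := neg_abs_le (Real.log (2/π^2))
          have := neg_abs_le (Real.log x)
          have := neg_abs_le (Real.log (π - x))
          linarith
      _ ≤ ‖_‖ := le_abs_self _

lemma ii_pow_log (n : ℕ) : IntervalIntegrable (fun x => x ^ n * Real.log x) volume 0 1 := by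
  refine ((intervalIntegrable_log01 zero_le_one).abs).mono_fun
    ((measurable_id.pow_const n).mul Real.measurable_log).aestronglyMeasurable ?_
  apply (MeasureTheory.ae_restrict_iff' measurableSet_uIoc).mpr
  filter_upwards with x hx
  rw [uIoc_of_le zero_le_one] at hx
  have h1 : |x ^ n| ≤ 1 := by
    rw [abs_of_nonneg (pow_nonneg hx.1.le n)]
    exact pow_le_one₀ hx.1.le hx.2
  calc ‖x ^ n * Real.log x‖ = |x ^ n| * |Real.log x| := abs_mul _ _
    _ ≤ 1 * |Real.log x| := by
        exact mul_le_mul_of_nonneg_right h1 (abs_nonneg _)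
    _ = ‖|Real.log x|‖ := by rw [one_mul, Real.norm_eq_abs, abs_abs]

lemma integral_pow_log (n : ℕ) :
    ∫ x in (0:ℝ)..1, x ^ n * Real.log x = -(1 / ((n:ℝ) + 1) ^ 2) := by
  have hn : (0:ℝ) < (n:ℝ) + 1 := by positivity
  set F : ℝ → ℝ := fun x => (x ^ (n+1) * (((n:ℝ)+1) * Real.log x - 1)) / ((n:ℝ)+1)^2 with hF
  have hderiv : ∀ x ∈ Ioo (0:ℝ) 1, HasDerivAt F (x ^ n * Real.log x) x := by
    intro x hx
    have hx0 : x ≠ 0 := ne_of_gt hx.1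
    have h1 : HasDerivAt (fun x : ℝ => x ^ (n+1)) (((n:ℝ)+1) * x ^ n) x := by
      simpa using hasDerivAt_pow (n+1) x
    have h2 : HasDerivAt (fun x : ℝ => ((n:ℝ)+1) * Real.log x - 1) (((n:ℝ)+1) / x) x := by
      simpa [div_eq_mul_inv] using ((Real.hasDerivAt_log hx0).const_mul ((n:ℝ)+1)).sub_const 1
    have h3 := (h1.mul h2).div_const (((n:ℝ)+1)^2)
    convert h3 using 1
    · rfl
    · rfl
    · rfl
    field_simp
    ring
  have ha : Filter.Tendsto F (nhdsWithin 0 (Set.Ioi 0)) (nhds 0) := by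
    have h0 : Filter.Tendsto (fun x : ℝ => Real.log x * x ^ ((n:ℝ)+1)) (nhdsWithin 0 (Set.Ioi 0)) (nhds 0) :=
      tendsto_log_mul_rpow_nhdsGT_zero hn
    have h1 : Filter.Tendsto (fun x : ℝ => x ^ (n+1)) (nhdsWithin 0 (Set.Ioi 0)) (nhds 0) := by
      have := (continuous_pow (n+1)).tendsto (0:ℝ)
      simp only [zero_pow (Nat.succ_ne_zero n)] at this
      exact this.mono_left nhdsWithin_le_nhds
    have heq : ∀ᶠ x in nhdsWithin (0:ℝ) (Set.Ioi 0),
        (Real.log x * x ^ ((n:ℝ)+1) * ((n:ℝ)+1) - x ^ (n+1)) / ((n:ℝ)+1)^2 = F x := by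
      filter_upwards [self_mem_nhdsWithin] with x hx
      have hx0 : (0:ℝ) < x := hx
      have hxp : x ^ ((n:ℝ)+1) = x ^ (n+1) := by
        rw [← Real.rpow_natCast x (n+1)]; norm_num
      rw [hF, hxp]
      ring
    have h2 := ((h0.mul_const ((n:ℝ)+1)).sub h1).div_const (((n:ℝ)+1)^2)
    rw [show (0 * ((n:ℝ)+1) - 0) / ((n:ℝ)+1)^2 = 0 by ring] at h2
    exact h2.congr' heq
  have hb : Filter.Tendsto F (nhdsWithin 1 (Set.Iio 1)) (nhds (-(1 / ((n:ℝ) + 1) ^ 2))) := by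
    have hc : ContinuousAt F 1 := by
      apply ContinuousAt.div_const
      exact (continuousAt_pow _ _).mul
        (((Real.continuousAt_log one_ne_zero).const_mul _).sub continuousAt_const)
    have : F 1 = -(1 / ((n:ℝ) + 1) ^ 2) := by
      rw [hF]; simp [Real.log_one]; ring
    rw [← this]
    exact hc.continuousWithinAt.tendsto
  have := intervalIntegral.integral_eq_sub_of_hasDerivAt_of_tendsto zero_lt_one hderiv
    (ii_pow_log n) ha hb
  rw [this]; ring

lemma summable_aux : Summable (fun k : ℕ => 1 / (2*(k:ℝ)+1)^2) := by
  have h : Summable (fun k : ℕ => 1 / ((k:ℝ)+1)^2) := by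
    have := Real.summable_one_div_nat_pow.mpr (le_refl 2)
    exact_mod_cast (summable_nat_add_iff 1).mpr this
  refine Summable.of_nonneg_of_le (fun k => by positivity) (fun k => ?_) h
  have h1 : ((k:ℝ)+1)^2 ≤ (2*(k:ℝ)+1)^2 := by nlinarith [Nat.cast_nonneg (α := ℝ) k]
  exact one_div_le_one_div_of_le (by positivity) h1

lemma integral_Ioo_pow_log (n : ℕ) :
    ∫ x in Ioo (0:ℝ) 1, x ^ n * Real.log x = -(1 / ((n:ℝ) + 1) ^ 2) := by
  rw [← integral_Ioc_eq_integral_Ioo, ← intervalIntegral.integral_of_le zero_le_one]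
  exact integral_pow_log n

lemma integral_log_div_one_add_sq :
    ∫ x in (0:ℝ)..1, Real.log x / (1+x^2) =
      -∑' k : ℕ, (-1:ℝ)^k/(2*(k:ℝ)+1)^2 := by
  set F : ℕ → ℝ → ℝ := fun k x => (-1)^k * (x^(2*k) * Real.log x) with hFdef
  have hFi : ∀ k, Integrable (F k) (volume.restrict (Ioo 0 1)) := by
    intro k
    exact (((ii_pow_log (2*k)).1).mono_set Ioo_subset_Ioc_self).const_mul _
  have hnorm : ∀ k, (∫ x in Ioo (0:ℝ) 1, ‖F k x‖) = 1/(2*(k:ℝ)+1)^2 := by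
    intro k
    have he : EqOn (fun x => ‖F k x‖) (fun x => -(x^(2*k) * Real.log x)) (Ioo (0:ℝ) 1) := by
      intro x hx
      have hl : Real.log x ≤ 0 := Real.log_nonpos hx.1.le hx.2.le
      have hp : (0:ℝ) ≤ x ^ (2*k) := pow_nonneg hx.1.le _
      simp only [hFdef, Real.norm_eq_abs, abs_mul, abs_pow, abs_neg, abs_one, one_pow, one_mul]
      rw [abs_of_nonneg hx.1.le, abs_of_nonpos hl]
      ring
    rw [setIntegral_congr_fun measurableSet_Ioo he]
    rw [MeasureTheory.integral_neg, integral_Ioo_pow_log]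
    push_cast
    ring
  have hsum : Summable (fun k => ∫ x in Ioo (0:ℝ) 1, ‖F k x‖) := by
    rw [funext hnorm]; exact summable_aux
  have hswap := MeasureTheory.integral_tsum_of_summable_integral_norm hFi hsum
  have hpt : EqOn (fun x => Real.log x / (1+x^2)) (fun x => ∑' k, F k x) (Ioo (0:ℝ) 1) := by
    intro x hx
    have hx2 : ‖-(x^2)‖ < 1 := by
      rw [norm_neg, Real.norm_eq_abs, abs_of_nonneg (sq_nonneg x)]
      nlinarith [hx.1, hx.2]
    have hgeo := tsum_geometric_of_norm_lt_one hx2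
    have hFx : ∀ k, F k x = (-(x^2))^k * Real.log x := by
      intro k
      simp only [hFdef]
      rw [neg_pow, pow_mul]
      ring
    simp only [hFx]
    rw [tsum_mul_right, hgeo]
    have h1 : (1:ℝ) - -(x^2) = 1 + x^2 := by ring
    rw [h1]
    field_simp
  rw [intervalIntegral.integral_of_le zero_le_one, integral_Ioc_eq_integral_Ioo,
    setIntegral_congr_fun measurableSet_Ioo hpt, ← hswap]
  have hterm : ∀ k : ℕ, (∫ x in Ioo (0:ℝ) 1, F k x) = -((-1:ℝ)^k/(2*(k:ℝ)+1)^2) := by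
    intro k
    simp only [hFdef]
    rw [MeasureTheory.integral_const_mul, integral_Ioo_pow_log]
    push_cast
    ring
  rw [funext hterm, tsum_neg]

lemma ils' {a b : ℝ} (h1 : 0 ≤ a) (h2 : a ≤ π) (h3 : 0 ≤ b) (h4 : b ≤ π) :
    IntervalIntegrable (fun x => Real.log (Real.sin x)) volume a b := by
  refine ils_pi.mono_set ?_
  rw [uIcc_subset_uIcc_iff_mem, uIcc_of_le Real.pi_pos.le]
  exact ⟨⟨h1, h2⟩, ⟨h3, h4⟩⟩

lemma ilc' {a b : ℝ} (h1 : 0 ≤ a) (h2 : a ≤ π/2) (h3 : 0 ≤ b) (h4 : b ≤ π/2) :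
    IntervalIntegrable (fun x => Real.log (Real.cos x)) volume a b := by
  have heq : (fun x => Real.log (Real.cos x)) = fun x => Real.log (Real.sin (π/2 - x)) := by
    funext x; rw [Real.sin_pi_div_two_sub]
  rw [heq]
  have hbase := (ils' (a := 0) (b := π/2) le_rfl Real.pi_pos.le (by positivity)
    (by linarith [Real.pi_pos])).comp_sub_left (π/2)
  simp only [sub_zero, sub_self] at hbase
  refine hbase.symm.mono_set ?_
  rw [uIcc_subset_uIcc_iff_mem, uIcc_of_le (by positivity : (0:ℝ) ≤ π/2)]
  exact ⟨⟨h1, h2⟩, ⟨h3, h4⟩⟩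

lemma logsin_half : ∫ x in (0:ℝ)..(π/2), Real.log (Real.sin x) = -(π/2) * Real.log 2 := by
  have hπ := Real.pi_pos
  set S := ∫ x in (0:ℝ)..(π/2), Real.log (Real.sin x) with hS
  have hils := ils' (a := 0) (b := π/2) le_rfl hπ.le (by positivity) (by linarith)
  have hilc := ilc' (a := 0) (b := π/2) le_rfl (by linarith) (by positivity) (by linarith)
  have hcos : ∫ x in (0:ℝ)..(π/2), Real.log (Real.cos x) = S := by
    have heq : (fun x => Real.log (Real.cos x)) = fun x => Real.log (Real.sin (π/2 - x)) := by
      funext x; rw [Real.sin_pi_div_two_sub]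
    rw [heq, intervalIntegral.integral_comp_sub_left (fun x => Real.log (Real.sin x)) (π/2)]
    norm_num
    rfl
  have h2 : ∫ x in (π/2)..π, Real.log (Real.sin x) = S := by
    have := intervalIntegral.integral_comp_sub_left (a := 0) (b := π/2)
      (fun x => Real.log (Real.sin x)) π
    simp only [sub_zero] at this
    rw [show π - π/2 = π/2 by ring] at this
    rw [← this]
    simp only [Real.sin_pi_sub]
    rfl
  have h3 : ∫ x in (0:ℝ)..π, Real.log (Real.sin x) = 2*S := by
    rw [← intervalIntegral.integral_add_adjacent_intervals (b := π/2) hils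
      (ils' (by positivity) (by linarith) hπ.le le_rfl), h2]
    ring
  have h4 : ∫ x in (0:ℝ)..(π/2), Real.log (Real.sin (2*x)) = S := by
    have := mul_integral_comp_mul_left (a := 0) (b := π/2)
      (f := fun x => Real.log (Real.sin x)) (c := 2)
    norm_num at this
    rw [show (2:ℝ) * (π/2) = π by ring] at this
    rw [h3] at this
    linarith
  have hne : ∀ᵐ x : ℝ ∂volume, x ≠ π/2 := by
    refine (MeasureTheory.ae_iff).mpr ?_
    simpa using MeasureTheory.measure_singleton (π/2)
  have h5 : ∫ x in (0:ℝ)..(π/2), Real.log (Real.sin (2*x))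
      = ∫ x in (0:ℝ)..(π/2), (Real.log 2 + (Real.log (Real.sin x) + Real.log (Real.cos x))) := by
    refine intervalIntegral.integral_congr_ae ?_
    filter_upwards [hne] with x hxne hx
    rw [uIoc_of_le (by positivity : (0:ℝ) ≤ π/2)] at hx
    have hx2 : x < π/2 := lt_of_le_of_ne hx.2 hxne
    have hsin : 0 < Real.sin x := Real.sin_pos_of_pos_of_lt_pi hx.1 (by linarith)
    have hcosp : 0 < Real.cos x := Real.cos_pos_of_mem_Ioo ⟨by have := hx.1; linarith, hx2⟩
    rw [Real.sin_two_mul, mul_assoc, Real.log_mul (by norm_num) (ne_of_gt (mul_pos hsin hcosp)),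
      Real.log_mul (ne_of_gt hsin) (ne_of_gt hcosp)]
  have h6 : ∫ x in (0:ℝ)..(π/2), (Real.log 2 + (Real.log (Real.sin x) + Real.log (Real.cos x)))
      = (π/2) * Real.log 2 + (S + S) := by
    rw [intervalIntegral.integral_add (intervalIntegrable_const) (hils.add hilc),
      intervalIntegral.integral_add hils hilc, hcos]
    rw [intervalIntegral.integral_const]
    simp only [sub_zero, smul_eq_mul]
    rfl
  rw [h5, h6] at h4
  linarith

noncomputable def Gc : ℝ := ∑' k : ℕ, (-1:ℝ)^k/(2*(k:ℝ)+1)^2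

-- substitution x = tan θ on Ioo a b ⊆ Ioo (-π/2) (π/2)
lemma tan_subst {a b : ℝ} (ha : -(π/2) < a) (hb : b ≤ π/2) (g : ℝ → ℝ) :
    ∫ x in Real.tan '' (Ioo a b), g x
      = ∫ θ in Ioo a b, (1/Real.cos θ^2) * g (Real.tan θ) := by
  have hcos : ∀ θ ∈ Ioo a b, 0 < Real.cos θ := fun θ hθ =>
    Real.cos_pos_of_mem_Ioo ⟨lt_of_le_of_lt (le_of_lt ha) hθ.1 |>.trans_le le_rfl |> fun _ => ha.trans hθ.1, hθ.2.trans_le hb⟩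
  have hderiv : ∀ θ ∈ Ioo a b, HasDerivWithinAt Real.tan (1/Real.cos θ^2) (Ioo a b) θ :=
    fun θ hθ => (Real.hasDerivAt_tan (ne_of_gt (hcos θ hθ))).hasDerivWithinAt
  have hinj : InjOn Real.tan (Ioo a b) := by
    refine Real.injOn_tan.mono ?_
    intro θ hθ
    exact ⟨ha.trans_le hθ.1.le |> fun _ => ha.trans hθ.1, hθ.2.trans_le hb⟩
  rw [MeasureTheory.integral_image_eq_integral_abs_deriv_smul measurableSet_Ioo hderiv hinj]
  refine setIntegral_congr_fun measurableSet_Ioo (fun θ hθ => ?_)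
  have := hcos θ hθ
  rw [smul_eq_mul, abs_of_pos (by positivity)]

lemma img1 : Real.tan '' (Ioo 0 (π/4)) = Ioo 0 1 := by
  have h4 : (0:ℝ) < π/4 := by positivity
  ext y
  constructor
  · rintro ⟨θ, hθ, rfl⟩
    refine ⟨Real.tan_pos_of_pos_of_lt_pi_div_two hθ.1 (by linarith [hθ.2, Real.pi_pos]), ?_⟩
    have := Real.tan_lt_tan_of_nonneg_of_lt_pi_div_two hθ.1.le (by linarith [Real.pi_pos]) hθ.2
    rwa [Real.tan_pi_div_four] at this
  · intro hy
    refine ⟨Real.arctan y, ⟨?_, ?_⟩, Real.tan_arctan y⟩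
    · have := Real.arctan_strictMono hy.1
      rwa [Real.arctan_zero] at this
    · have := Real.arctan_strictMono hy.2
      rwa [Real.arctan_one] at this

lemma img2 : Real.tan '' (Ioo (π/4) (π/2)) = Ioi 1 := by
  have hπ := Real.pi_pos
  ext y
  constructor
  · rintro ⟨θ, hθ, rfl⟩
    have := Real.tan_lt_tan_of_nonneg_of_lt_pi_div_two (by linarith : (0:ℝ) ≤ π/4) hθ.2 hθ.1
    rwa [Real.tan_pi_div_four] at this
  · intro hy
    have hy1 : (1:ℝ) < y := hy
    refine ⟨Real.arctan y, ⟨?_, Real.arctan_lt_pi_div_two y⟩, Real.tan_arctan y⟩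
    have := Real.arctan_strictMono hy1
    rwa [Real.arctan_one] at this

lemma interval_eq_Ioo {a b : ℝ} (h : a ≤ b) (f : ℝ → ℝ) :
    ∫ x in a..b, f x = ∫ x in Ioo a b, f x := by
  rw [intervalIntegral.integral_of_le h, integral_Ioc_eq_integral_Ioo]

lemma Ls_sub_Lc :
    (∫ x in (0:ℝ)..(π/4), Real.log (Real.sin x))
      - (∫ x in (0:ℝ)..(π/4), Real.log (Real.cos x)) = -Gc := by
  have hπ := Real.pi_pos
  have h4 : (0:ℝ) < π/4 := by positivity
  have h := tan_subst (a := 0) (b := π/4) (by linarith) (by linarith)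
    (fun x => Real.log x/(1+x^2))
  rw [img1] at h
  have hL : ∫ x in Ioo (0:ℝ) 1, Real.log x/(1+x^2) = -Gc := by
    rw [← interval_eq_Ioo zero_le_one]
    exact integral_log_div_one_add_sq
  have hR : ∫ θ in Ioo (0:ℝ) (π/4), (1/Real.cos θ^2) * (Real.log (Real.tan θ)/(1+Real.tan θ^2))
      = ∫ θ in Ioo (0:ℝ) (π/4), (Real.log (Real.sin θ) - Real.log (Real.cos θ)) := by
    refine setIntegral_congr_fun measurableSet_Ioo (fun θ hθ => ?_)
    have hc : 0 < Real.cos θ := Real.cos_pos_of_mem_Ioo ⟨by linarith [hθ.1], by linarith [hθ.2]⟩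
    have hs : 0 < Real.sin θ := Real.sin_pos_of_pos_of_lt_pi hθ.1 (by linarith [hθ.2])
    have ht : 0 < Real.tan θ := Real.tan_pos_of_pos_of_lt_pi_div_two hθ.1 (by linarith [hθ.2])
    have h1 : (1:ℝ) + Real.tan θ^2 = (Real.cos θ^2)⁻¹ := by
      rw [← Real.inv_one_add_tan_sq (ne_of_gt hc), inv_inv]
    rw [div_eq_mul_inv (Real.log (Real.tan θ)), h1, inv_inv]
    rw [Real.tan_eq_sin_div_cos, Real.log_div (ne_of_gt hs) (ne_of_gt hc)]
    field_simp
  rw [hL, hR] at h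
  rw [interval_eq_Ioo h4.le, interval_eq_Ioo h4.le,
    ← MeasureTheory.integral_sub
      ((ils' le_rfl hπ.le h4.le (by linarith)).1.mono_set Ioo_subset_Ioc_self)
      ((ilc' le_rfl (by linarith) h4.le (by linarith)).1.mono_set Ioo_subset_Ioc_self)]
  exact h.symm

lemma Ls_add_Lc :
    (∫ x in (0:ℝ)..(π/4), Real.log (Real.sin x))
      + (∫ x in (0:ℝ)..(π/4), Real.log (Real.cos x)) = -(π/2) * Real.log 2 := by
  have hπ := Real.pi_pos
  have h4 : (0:ℝ) < π/4 := by positivity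
  have hdouble : ∫ x in (0:ℝ)..(π/4), Real.log (Real.sin (2*x)) = -(π/4) * Real.log 2 := by
    have := mul_integral_comp_mul_left (a := 0) (b := π/4)
      (f := fun x => Real.log (Real.sin x)) (c := 2)
    norm_num at this
    rw [show (2:ℝ) * (π/4) = π/2 by ring] at this
    rw [logsin_half] at this
    linarith
  have hcongr : ∫ x in (0:ℝ)..(π/4), Real.log (Real.sin (2*x))
      = ∫ x in (0:ℝ)..(π/4),
          (Real.log 2 + (Real.log (Real.sin x) + Real.log (Real.cos x))) := by
    refine intervalIntegral.integral_congr_ae (Filter.Eventually.of_forall (fun x hx => ?_))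
    rw [uIoc_of_le h4.le] at hx
    have hs : 0 < Real.sin x := Real.sin_pos_of_pos_of_lt_pi hx.1 (by linarith [hx.2])
    have hc : 0 < Real.cos x := Real.cos_pos_of_mem_Ioo ⟨by linarith [hx.1], by linarith [hx.2]⟩
    rw [Real.sin_two_mul, mul_assoc, Real.log_mul (by norm_num) (ne_of_gt (mul_pos hs hc)),
      Real.log_mul (ne_of_gt hs) (ne_of_gt hc)]
  have hvals : ∫ x in (0:ℝ)..(π/4),
      (Real.log 2 + (Real.log (Real.sin x) + Real.log (Real.cos x)))
      = (π/4) * Real.log 2 + ((∫ x in (0:ℝ)..(π/4), Real.log (Real.sin x))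
        + ∫ x in (0:ℝ)..(π/4), Real.log (Real.cos x)) := by
    rw [intervalIntegral.integral_add intervalIntegrable_const
        ((ils' le_rfl hπ.le h4.le (by linarith)).add (ilc' le_rfl (by linarith) h4.le (by linarith))),
      intervalIntegral.integral_add (ils' le_rfl hπ.le h4.le (by linarith))
        (ilc' le_rfl (by linarith) h4.le (by linarith)),
      intervalIntegral.integral_const]
    simp only [sub_zero, smul_eq_mul]
  rw [hcongr, hvals] at hdouble
  linarith

lemma Lc_val : ∫ x in (0:ℝ)..(π/4), Real.log (Real.cos x) = Gc/2 - (π/4) * Real.log 2 := by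
  have h1 := Ls_sub_Lc; have h2 := Ls_add_Lc; linarith

lemma Ls_val : ∫ x in (0:ℝ)..(π/4), Real.log (Real.sin x) = -Gc/2 - (π/4) * Real.log 2 := by
  have h1 := Ls_sub_Lc; have h2 := Ls_add_Lc; linarith

lemma neg_two_log_cos {a b : ℝ} (ha : -(π/2) < a) (hb : b ≤ π/2)
    (hsub : Ioo a b ⊆ Ioo (-(π/2)) (π/2)) :
    ∫ θ in Ioo a b, (1/Real.cos θ^2) * (Real.log (1+Real.tan θ^2)/(1+Real.tan θ^2))
      = ∫ θ in Ioo a b, (-2) * Real.log (Real.cos θ) := by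
  refine setIntegral_congr_fun measurableSet_Ioo (fun θ hθ => ?_)
  have hc : 0 < Real.cos θ := Real.cos_pos_of_mem_Ioo (hsub hθ)
  have h1 : (1:ℝ) + Real.tan θ^2 = (Real.cos θ^2)⁻¹ := by
    rw [← Real.inv_one_add_tan_sq (ne_of_gt hc), inv_inv]
  rw [h1, Real.log_inv, Real.log_pow]
  push_cast
  have hne := hc.ne'
  field_simp

lemma partJ : ∫ x in (0:ℝ)..1, Real.log (1+x^2)/(1+x^2) = (π/2) * Real.log 2 - Gc := by
  have hπ := Real.pi_pos
  have h4 : (0:ℝ) < π/4 := by positivity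
  have h := tan_subst (a := 0) (b := π/4) (by linarith) (by linarith)
    (fun x => Real.log (1+x^2)/(1+x^2))
  rw [img1, neg_two_log_cos (by linarith) (by linarith)
    (fun θ hθ => ⟨by linarith [hθ.1], by linarith [hθ.2]⟩)] at h
  rw [interval_eq_Ioo zero_le_one, h, MeasureTheory.integral_const_mul,
    ← interval_eq_Ioo h4.le, Lc_val]
  ring

lemma partK : ∫ t in Ioi (1:ℝ), Real.log (1+t^2)/(1+t^2) = (π/2) * Real.log 2 + Gc := by
  have hπ := Real.pi_pos
  have h4 : (0:ℝ) < π/4 := by positivity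
  have h := tan_subst (a := π/4) (b := π/2) (by linarith) le_rfl
    (fun x => Real.log (1+x^2)/(1+x^2))
  rw [img2, neg_two_log_cos (by linarith) le_rfl
    (fun θ hθ => ⟨by linarith [hθ.1], hθ.2⟩)] at h
  have hrefl : ∫ x in (π/4:ℝ)..(π/2), Real.log (Real.cos x)
      = ∫ x in (0:ℝ)..(π/4), Real.log (Real.sin x) := by
    have := intervalIntegral.integral_comp_sub_left (a := 0) (b := π/4)
      (fun x => Real.log (Real.cos x)) (π/2)
    simp only [sub_zero] at this
    rw [show π/2 - π/4 = π/4 by ring] at this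
    rw [← this]
    simp only [Real.cos_pi_div_two_sub]
  rw [h, MeasureTheory.integral_const_mul, ← interval_eq_Ioo (by linarith), hrefl, Ls_val]
  ring


lemma cont_logtan : ContinuousOn (fun x => Real.log (1 + Real.tan x)) (uIcc (0:ℝ) (π/4)) := by
  have hπ := Real.pi_pos
  rw [uIcc_of_le (by positivity)]
  intro x hx
  have hc : 0 < Real.cos x := Real.cos_pos_of_mem_Ioo ⟨by linarith [hx.1], by linarith [hx.2]⟩
  have hs : 0 ≤ Real.sin x := Real.sin_nonneg_of_nonneg_of_le_pi hx.1 (by linarith [hx.2])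
  have ht : 0 ≤ Real.tan x := by
    rw [Real.tan_eq_sin_div_cos]; exact div_nonneg hs hc.le
  have htan : ContinuousAt Real.tan x := Real.continuousAt_tan.mpr (ne_of_gt hc)
  exact (((continuousAt_const.add htan).log (ne_of_gt (by simp only [Pi.add_apply]; linarith))).continuousWithinAt)

lemma intA : IntervalIntegrable (fun x => Real.log (1 + Real.tan x)) volume 0 (π/4) :=
  cont_logtan.intervalIntegrable

lemma A_val : ∫ x in (0:ℝ)..(π/4), Real.log (1 + Real.tan x) = (π/8) * Real.log 2 := by
  have hπ := Real.pi_pos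
  have h4 : (0:ℝ) < π/4 := by positivity
  have hrefl := intervalIntegral.integral_comp_sub_left (a := 0) (b := π/4)
    (fun x => Real.log (1 + Real.tan x)) (π/4)
  simp only [sub_zero, sub_self] at hrefl
  have hcongr : ∫ x in (0:ℝ)..(π/4), Real.log (1 + Real.tan (π/4 - x))
      = ∫ x in (0:ℝ)..(π/4), (Real.log 2 - Real.log (1 + Real.tan x)) := by
    refine intervalIntegral.integral_congr_ae (Filter.Eventually.of_forall (fun x hx => ?_))
    rw [uIoc_of_le h4.le] at hx
    have hc : 0 < Real.cos x := Real.cos_pos_of_mem_Ioo ⟨by linarith [hx.1], by linarith [hx.2]⟩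
    have hs : 0 < Real.sin x := Real.sin_pos_of_pos_of_lt_pi hx.1 (by linarith [hx.2])
    have hcs : 0 < Real.cos x + Real.sin x := by linarith
    have hq : (0:ℝ) < Real.sqrt 2 / 2 := by positivity
    have e1 : Real.tan (π/4 - x) = (Real.cos x - Real.sin x)/(Real.cos x + Real.sin x) := by
      rw [Real.tan_eq_sin_div_cos, Real.sin_sub, Real.cos_sub, Real.sin_pi_div_four,
        Real.cos_pi_div_four]
      rw [div_eq_div_iff (by nlinarith) (ne_of_gt hcs)]
      ring
    have ht : 0 < 1 + Real.tan x := by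
      have : 0 ≤ Real.tan x := by rw [Real.tan_eq_sin_div_cos]; positivity
      linarith
    have e2 : 1 + Real.tan (π/4 - x) = 2/(1 + Real.tan x) := by
      rw [e1, Real.tan_eq_sin_div_cos]
      field_simp
      ring
    rw [e2, Real.log_div two_ne_zero (ne_of_gt ht)]
  rw [hcongr] at hrefl
  rw [intervalIntegral.integral_sub intervalIntegrable_const intA,
    intervalIntegral.integral_const] at hrefl
  simp only [sub_zero, smul_eq_mul] at hrefl
  linarith

lemma G0_int : IntervalIntegrable (fun x => Real.log (1 + Real.tan x)
    - (Real.log (Real.sin x) - Real.log (Real.cos x))) volume 0 (π/4) := by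
  have hπ := Real.pi_pos
  exact intA.sub ((ils' le_rfl hπ.le (by positivity) (by linarith)).sub
    (ilc' le_rfl (by linarith) (by positivity) (by linarith)))

lemma eq_on_piece : ∀ x ∈ Ioc (0:ℝ) (π/4), Real.log (1 + Real.tan (π/2 - x))
    = Real.log (1 + Real.tan x) - (Real.log (Real.sin x) - Real.log (Real.cos x)) := by
  intro x hx
  have hπ := Real.pi_pos
  have hc : 0 < Real.cos x := Real.cos_pos_of_mem_Ioo ⟨by linarith [hx.1], by linarith [hx.2]⟩
  have hs : 0 < Real.sin x := Real.sin_pos_of_pos_of_lt_pi hx.1 (by linarith [hx.2])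
  have ht : 0 < Real.tan x := Real.tan_pos_of_pos_of_lt_pi_div_two hx.1 (by linarith [hx.2])
  rw [Real.tan_pi_div_two_sub]
  have e1 : (1:ℝ) + (Real.tan x)⁻¹ = (1+Real.tan x)/Real.tan x := by
    field_simp
    ring
  rw [e1, Real.log_div (by linarith) (ne_of_gt ht), Real.tan_eq_sin_div_cos,
    Real.log_div (ne_of_gt hs) (ne_of_gt hc)]

lemma intB : IntervalIntegrable (fun x => Real.log (1 + Real.tan x)) volume (π/4) (π/2) := by
  have hπ := Real.pi_pos
  have h4 : (0:ℝ) < π/4 := by positivity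
  have h1 : IntervalIntegrable (fun x => Real.log (1 + Real.tan (π/2 - x))) volume 0 (π/4) := by
    have hG := G0_int
    rw [intervalIntegrable_iff] at hG ⊢
    rw [uIoc_of_le h4.le] at hG ⊢
    exact hG.congr_fun (fun x hx => (eq_on_piece x hx).symm) measurableSet_Ioc
  have h2 := h1.comp_sub_left (π/2)
  simp only [sub_zero, sub_sub_cancel] at h2
  rw [show π/2 - π/4 = π/4 by ring] at h2
  exact h2.symm

lemma B_val : ∫ x in (π/4:ℝ)..(π/2), Real.log (1 + Real.tan x)
    = (π/8) * Real.log 2 + Gc := by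
  have hπ := Real.pi_pos
  have h4 : (0:ℝ) < π/4 := by positivity
  have hrefl := intervalIntegral.integral_comp_sub_left (a := 0) (b := π/4)
    (fun x => Real.log (1 + Real.tan x)) (π/2)
  simp only [sub_zero] at hrefl
  rw [show π/2 - π/4 = π/4 by ring] at hrefl
  have hcongr : ∫ x in (0:ℝ)..(π/4), Real.log (1 + Real.tan (π/2 - x))
      = ∫ x in (0:ℝ)..(π/4), (Real.log (1 + Real.tan x)
        - (Real.log (Real.sin x) - Real.log (Real.cos x))) := by
    refine intervalIntegral.integral_congr_ae (Filter.Eventually.of_forall (fun x hx => ?_))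
    rw [uIoc_of_le h4.le] at hx
    exact eq_on_piece x hx
  rw [← hrefl, hcongr, intervalIntegral.integral_sub intA
    ((ils' le_rfl hπ.le h4.le (by linarith)).sub (ilc' le_rfl (by linarith) h4.le (by linarith))),
    intervalIntegral.integral_sub (ils' le_rfl hπ.le h4.le (by linarith))
      (ilc' le_rfl (by linarith) h4.le (by linarith)),
    A_val, Ls_val, Lc_val]
  ring

lemma part1 : ∫ x in (0:ℝ)..(π/2), Real.log (1 + Real.tan x)
    = (π/4) * Real.log 2 + Gc := by
  rw [← intervalIntegral.integral_add_adjacent_intervals intA intB, A_val, B_val]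
  ring

/-- GR 4.227.10, 4.295.5 and 4.295.6:
`∫_0^{π/2} ln(1 + tan x) dx = (π/4) ln 2 + G`,
`∫_0^1 ln(1+x²)/(1+x²) dx = (π/2) ln 2 - G`, and
`∫_1^∞ ln(1+t²)/(1+t²) dt = (π/2) ln 2 + G`, where `G` is Catalan's constant. -/
theorem integral_log_one_add_tan_and_friends :
    (∫ x in (0:ℝ)..(Real.pi / 2), Real.log (1 + Real.tan x) =
      (Real.pi / 4) * Real.log 2 + ∑' k : ℕ, (-1 : ℝ) ^ k / (2 * (k : ℝ) + 1) ^ 2) ∧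
    (∫ x in (0:ℝ)..1, Real.log (1 + x ^ 2) / (1 + x ^ 2) =
      (Real.pi / 2) * Real.log 2 - ∑' k : ℕ, (-1 : ℝ) ^ k / (2 * (k : ℝ) + 1) ^ 2) ∧
    (∫ t in Set.Ioi (1:ℝ), Real.log (1 + t ^ 2) / (1 + t ^ 2) =
      (Real.pi / 2) * Real.log 2 + ∑' k : ℕ, (-1 : ℝ) ^ k / (2 * (k : ℝ) + 1) ^ 2) := by
  refine ⟨?_, ?_, ?_⟩
  · have := part1; rw [Gc] at this; exact this
  · have := partJ; rw [Gc] at this; exact this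
  · have := partK; rw [Gc] at this; exact this
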